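/- In the fixed-design Gaussian linear model y = Xβ + z, let j be a null feature (β_j = 0) and let x̃_j^{(1)},…,x̃_j^{(M)} be multiple knockoff copies of x_j satisfying the multiple-knockoff correlation conditions with parameter s_j. Write x̃_j^{(0)} = x_j. Then for every permutation π of {0,1,…,M}, the random vector (yᵀX_{\j}, yᵀx̃_j^{(0)}, yᵀx̃_j^{(1)}, …, yᵀx̃_j^{(M)}) has the same distribution as (yᵀX_{\j}, yᵀx̃_j^{(π(0))}, yᵀx̃_j^{(π(1))}, …, yᵀx̃_j^{(π(M))}); in particular, the OLS coefficient vector (β̂_j^{(0)}, β̂_j^{(1)}, …, β̂_j^{(M)}) is exchangeable, where β̂_j^{(m)} is the coefficient of x̃_j^{(m)} from regressing y onto [X_{\j}, x̃_j^{(m)}]. -/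

import Mathlib

open MeasureTheory ProbabilityTheory Matrix
open scoped NNReal

noncomputable section

open scoped ENNReal RealInnerProductSpace

section AuxLemmas

lemma aux_lintegral_pi_prod : ∀ {n : ℕ} (μ : Measure ℝ) [SigmaFinite μ]
    (g : Fin n → ℝ → ℝ≥0∞), (∀ i, Measurable (g i)) →
    ∫⁻ x : Fin n → ℝ, ∏ i, g i (x i) ∂(Measure.pi fun _ => μ) = ∏ i, ∫⁻ t, g i t ∂μ := by
  intro n
  induction n with
  | zero =>
    intro μ _ g hg
    rw [Measure.pi_of_empty (fun _ : Fin 0 => μ)]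
    simp
  | succ n ih =>
    intro μ _ g hg
    have MP := measurePreserving_piFinSuccAbove (fun _ : Fin (n+1) => μ) 0
    have hF : Measurable (fun q : ℝ × (Fin n → ℝ) => g 0 q.1 * ∏ j, g j.succ (q.2 j)) := by
      apply Measurable.mul
      · exact (hg 0).comp measurable_fst
      · apply Finset.measurable_prod
        intro j _
        exact (hg j.succ).comp ((measurable_pi_apply j).comp measurable_snd)
    have key : ∫⁻ x : Fin (n+1) → ℝ, ∏ i, g i (x i) ∂(Measure.pi fun _ => μ)
        = ∫⁻ q : ℝ × (Fin n → ℝ), g 0 q.1 * ∏ j, g j.succ (q.2 j)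
            ∂(μ.prod (Measure.pi fun _ : Fin n => μ)) := by
      rw [← MP.lintegral_comp hF]
      congr 1
      ext x
      simp only [MeasurableEquiv.piFinSuccAbove, Fin.prod_univ_succ, Fin.succAbove,
        MeasurableEquiv.coe_mk, Fin.insertNthEquiv,
        Fin.removeNth]
      rfl
    have h2 : AEMeasurable (fun b : Fin n → ℝ => ∏ j, g j.succ (b j))
        (Measure.pi fun _ : Fin n => μ) := by
      apply Measurable.aemeasurable
      apply Finset.measurable_prod
      intro j _
      exact (hg j.succ).comp (measurable_pi_apply j)
    rw [key, lintegral_prod_mul (hg 0).aemeasurable h2,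
      ih μ (fun j => g j.succ) (fun j => hg j.succ), Fin.prod_univ_succ]

lemma aux_pi_gaussian_eq_withDensity {n : ℕ} {σ2 : ℝ≥0} (hσ : σ2 ≠ 0) :
    (Measure.pi fun _ : Fin n => gaussianReal 0 σ2)
      = volume.withDensity (fun x => ∏ i, gaussianPDF 0 σ2 (x i)) := by
  apply Measure.pi_eq
  intro s hs
  rw [withDensity_apply _ (MeasurableSet.univ_pi hs)]
  have : ∫⁻ x in Set.univ.pi s, ∏ i, gaussianPDF 0 σ2 (x i) ∂volume
      = ∫⁻ x : Fin n → ℝ, ∏ i, (s i).indicator (gaussianPDF 0 σ2) (x i)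
          ∂(Measure.pi fun _ => volume) := by
    rw [← lintegral_indicator (MeasurableSet.univ_pi hs) _, volume_pi]
    congr 1
    ext x
    classical
    by_cases hx : x ∈ Set.univ.pi s
    · rw [Set.indicator_of_mem hx]
      exact Finset.prod_congr rfl fun i _ =>
        (Set.indicator_of_mem (hx i (Set.mem_univ i)) _).symm
    · rw [Set.indicator_of_notMem hx]
      rw [Set.mem_univ_pi] at hx
      push_neg at hx
      obtain ⟨i, hi⟩ := hx
      exact (Finset.prod_eq_zero (Finset.mem_univ i)
        (by rw [Set.indicator_of_notMem hi])).symm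
  rw [this, aux_lintegral_pi_prod volume _
    (fun i => (measurable_gaussianPDF 0 σ2).indicator (hs i))]
  refine Finset.prod_congr rfl fun i _ => ?_
  rw [lintegral_indicator (hs i) _, gaussianReal_apply _ hσ]

lemma aux_prod_gaussianPDF_dot {n : ℕ} (σ2 : ℝ≥0) (x : Fin n → ℝ) :
    ∏ i, gaussianPDF 0 σ2 (x i)
      = ENNReal.ofReal ((Real.sqrt (2 * Real.pi * σ2))⁻¹ ^ n
          * Real.exp (-(x ⬝ᵥ x) / (2 * σ2))) := by
  rw [show (∏ i, gaussianPDF 0 σ2 (x i))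
      = ∏ i, ENNReal.ofReal (gaussianPDFReal 0 σ2 (x i)) from rfl,
    ← ENNReal.ofReal_prod_of_nonneg (fun i _ => gaussianPDFReal_nonneg 0 σ2 (x i))]
  · congr 1
    simp only [gaussianPDFReal, sub_zero]
    rw [Finset.prod_mul_distrib, Finset.prod_const, ← Real.exp_sum]
    congr 2
    · simp [Finset.card_univ]
    · rw [← Finset.sum_div]
      congr 1
      simp [dotProduct, sq, Finset.sum_neg_distrib]

lemma aux_pi_dirac_zero {n : ℕ} :
    (Measure.pi fun _ : Fin n => Measure.dirac (0 : ℝ)) = Measure.dirac (0 : Fin n → ℝ) := by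
  apply Measure.pi_eq
  intro s hs
  classical
  rw [Measure.dirac_apply' _ (MeasurableSet.univ_pi hs)]
  by_cases h : ∀ i, (0 : ℝ) ∈ s i
  · rw [Set.indicator_of_mem (by simpa [Set.mem_univ_pi] using h) 1]
    simp only [Pi.one_apply]
    symm
    apply Finset.prod_eq_one
    intro i _
    simp [Measure.dirac_apply' _ (hs i), Set.indicator_of_mem (h i)]
  · push_neg at h
    obtain ⟨i, hi⟩ := h
    rw [Set.indicator_of_notMem (by simp [Set.mem_univ_pi]; exact ⟨i, hi⟩) 1]
    symm
    apply Finset.prod_eq_zero (Finset.mem_univ i)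
    simp [Measure.dirac_apply' _ (hs i), Set.indicator_of_notMem hi]

lemma aux_map_withDensity_measurableEquiv {α β : Type*} [MeasurableSpace α] [MeasurableSpace β]
    (μ : Measure α) (e : α ≃ᵐ β) (f : α → ℝ≥0∞) (hf : Measurable f) :
    (μ.withDensity f).map e = (μ.map e).withDensity (f ∘ e.symm) := by
  ext s hs
  rw [Measure.map_apply e.measurable hs, withDensity_apply _ (e.measurable hs),
    withDensity_apply _ hs, setLIntegral_map hs (hf.comp e.symm.measurable) e.measurable]
  refine setLIntegral_congr_fun (e.measurable hs) (fun x _ => ?_)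
  simp

lemma aux_map_pi_gaussian {n : ℕ} (σ2 : ℝ≥0) (Q : (Fin n → ℝ) ≃ₗ[ℝ] (Fin n → ℝ))
    (hdot : ∀ w u, Q w ⬝ᵥ Q u = w ⬝ᵥ u) :
    (Measure.pi fun _ : Fin n => gaussianReal 0 σ2).map Q
      = Measure.pi fun _ : Fin n => gaussianReal 0 σ2 := by
  have hQc : Continuous (Q : (Fin n → ℝ) → (Fin n → ℝ)) :=
    LinearMap.continuous_on_pi Q.toLinearMap
  have hQic : Continuous (Q.symm : (Fin n → ℝ) → (Fin n → ℝ)) :=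
    LinearMap.continuous_on_pi Q.symm.toLinearMap
  have hQm : Measurable (Q : (Fin n → ℝ) → (Fin n → ℝ)) := hQc.measurable
  have hQim : Measurable (Q.symm : (Fin n → ℝ) → (Fin n → ℝ)) := hQic.measurable
  by_cases hσ : σ2 = 0
  · subst hσ
    simp only [gaussianReal_zero_var, aux_pi_dirac_zero]
    rw [Measure.map_dirac' hQm]
    simp
  have hmat : (LinearMap.toMatrix' Q.toLinearMap)ᵀ * LinearMap.toMatrix' Q.toLinearMap = 1 := by
    ext i k
    simp only [Matrix.mul_apply, Matrix.transpose_apply, LinearMap.toMatrix'_apply]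
    have := hdot (fun j' => if j' = i then 1 else 0) (fun j' => if j' = k then 1 else 0)
    simp only [dotProduct] at this ⊢
    have hs : ∀ a : Fin n, (Pi.single a (1:ℝ) : Fin n → ℝ) = fun j' => if j' = a then 1 else 0 :=
      fun a => by funext j'; simp [Pi.single_apply]
    simp only [hs]
    rw [show (∑ x, Q.toLinearMap (fun j' => if j' = i then 1 else 0) x
        * Q.toLinearMap (fun j' => if j' = k then 1 else 0) x) =
        ∑ x, (Q (fun j' => if j' = i then 1 else 0)) x * (Q (fun j' => if j' = k then 1 else 0)) x
      from rfl, this, Matrix.one_apply]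
    classical
    by_cases h : i = k
    · simp [h, Finset.sum_ite_eq]
    · simp only [Finset.sum_ite_eq, Finset.mem_univ, if_true, Matrix.one_apply, if_neg h]
      simp [h]
      exact fun hh => h hh.symm
  have hdet2 : LinearMap.det Q.toLinearMap * LinearMap.det Q.toLinearMap = 1 := by
    rw [← LinearMap.det_toMatrix' Q.toLinearMap]
    calc (LinearMap.toMatrix' Q.toLinearMap).det * (LinearMap.toMatrix' Q.toLinearMap).det
        = ((LinearMap.toMatrix' Q.toLinearMap)ᵀ * LinearMap.toMatrix' Q.toLinearMap).det := by
          rw [Matrix.det_mul, Matrix.det_transpose]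
      _ = 1 := by rw [hmat, Matrix.det_one]
  have hdet_ne : LinearMap.det Q.toLinearMap ≠ 0 := by
    intro h; rw [h, zero_mul] at hdet2; exact zero_ne_one hdet2
  have habs : |(LinearMap.det Q.toLinearMap)⁻¹| = 1 := by
    have h1 : LinearMap.det Q.toLinearMap = 1 ∨ LinearMap.det Q.toLinearMap = -1 :=
      mul_self_eq_one_iff.mp hdet2
    rcases h1 with h | h <;> rw [h] <;> norm_num
  have hvol : Measure.map (Q : (Fin n → ℝ) → (Fin n → ℝ)) volume = volume := by
    have := Real.map_linearMap_volume_pi_eq_smul_volume_pi hdet_ne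
    rw [show ⇑Q.toLinearMap = ⇑Q from rfl] at this
    rw [this, habs, ENNReal.ofReal_one, one_smul]
  let e : (Fin n → ℝ) ≃ᵐ (Fin n → ℝ) := ⟨Q.toEquiv, hQm, hQim⟩
  have hcoe : (e : (Fin n → ℝ) → (Fin n → ℝ)) = ⇑Q := rfl
  have hcoes : (e.symm : (Fin n → ℝ) → (Fin n → ℝ)) = ⇑Q.symm := rfl
  rw [aux_pi_gaussian_eq_withDensity hσ]
  have hfm : Measurable (fun x : Fin n → ℝ => ∏ i, gaussianPDF 0 σ2 (x i)) :=
    Finset.measurable_prod _ fun i _ =>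
      (measurable_gaussianPDF 0 σ2).comp (measurable_pi_apply i)
  have := aux_map_withDensity_measurableEquiv volume e _ hfm
  rw [hcoe] at this
  rw [this, hvol]
  congr 1
  ext x
  simp only [Function.comp_apply, hcoes]
  rw [aux_prod_gaussianPDF_dot, aux_prod_gaussianPDF_dot]
  have : Q (Q.symm x) ⬝ᵥ Q (Q.symm x) = Q.symm x ⬝ᵥ Q.symm x := hdot _ _
  rw [Q.apply_symm_apply] at this
  rw [this]

lemma aux_gram_isometry {n : ℕ} {κ : Type} [Fintype κ] [DecidableEq κ]
    (v v' : κ → (Fin n → ℝ))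
    (hGram : ∀ a b, v a ⬝ᵥ v b = v' a ⬝ᵥ v' b) :
    ∃ Q : (Fin n → ℝ) ≃ₗ[ℝ] (Fin n → ℝ),
      (∀ w u, Q w ⬝ᵥ Q u = w ⬝ᵥ u) ∧ ∀ a, Q (v a) = v' a := by
  classical
  have hinner : ∀ x y : EuclideanSpace ℝ (Fin n),
      ⟪x, y⟫ = (x : Fin n → ℝ) ⬝ᵥ (y : Fin n → ℝ) := by
    intro x y
    simp [PiLp.inner_apply, dotProduct, RCLike.inner_apply, mul_comm]
  let vE : κ → EuclideanSpace ℝ (Fin n) := fun a => WithLp.toLp 2 (v a)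
  let vE' : κ → EuclideanSpace ℝ (Fin n) := fun a => WithLp.toLp 2 (v' a)
  let T : (κ → ℝ) →ₗ[ℝ] EuclideanSpace ℝ (Fin n) :=
    { toFun := fun c => ∑ a, c a • vE a
      map_add' := by
        intro c d
        simp [add_smul, Finset.sum_add_distrib]
      map_smul' := by
        intro r c
        simp [smul_smul, Finset.smul_sum] }
  let T' : (κ → ℝ) →ₗ[ℝ] EuclideanSpace ℝ (Fin n) :=
    { toFun := fun c => ∑ a, c a • vE' a
      map_add' := by
        intro c d
        simp [add_smul, Finset.sum_add_distrib]
      map_smul' := by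
        intro r c
        simp [smul_smul, Finset.smul_sum] }
  have hTval : ∀ c, T c = ∑ a, c a • vE a := fun _ => rfl
  have hTval' : ∀ c, T' c = ∑ a, c a • vE' a := fun _ => rfl
  have hinner_sum : ∀ c : κ → ℝ, ⟪T c, T c⟫ = ⟪T' c, T' c⟫ := by
    intro c
    rw [hTval, hTval']
    rw [sum_inner, sum_inner]
    refine Finset.sum_congr rfl fun a _ => ?_
    rw [inner_sum, inner_sum]
    refine Finset.sum_congr rfl fun b _ => ?_
    rw [real_inner_smul_left, real_inner_smul_left, real_inner_smul_right,
      real_inner_smul_right, hinner, hinner]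
    have := hGram a b
    simp only [vE, vE', WithLp.ofLp_toLp]
    rw [this]
  have hnorm_eq : ∀ c : κ → ℝ, ‖T' c‖ = ‖T c‖ := by
    intro c
    rw [norm_eq_sqrt_real_inner, norm_eq_sqrt_real_inner, hinner_sum]
  have hker : LinearMap.ker T ≤ LinearMap.ker T' := by
    intro c hc
    rw [LinearMap.mem_ker] at hc ⊢
    have := hnorm_eq c
    rw [hc, norm_zero] at this
    exact norm_eq_zero.mp this
  let f : ((κ → ℝ) ⧸ LinearMap.ker T) →ₗ[ℝ] EuclideanSpace ℝ (Fin n) :=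
    (LinearMap.ker T).liftQ T' hker
  let eT := T.quotKerEquivRange
  let L : LinearMap.range T →ₗ[ℝ] EuclideanSpace ℝ (Fin n) :=
    f.comp (eT.symm : LinearMap.range T →ₗ[ℝ] _)
  have hL : ∀ c : κ → ℝ, ∀ h, L ⟨T c, h⟩ = T' c := by
    intro c h
    have h1 : eT (Submodule.Quotient.mk c) = ⟨T c, h⟩ := by
      apply Subtype.ext
      exact T.quotKerEquivRange_apply_mk c
    have h2 : eT.symm ⟨T c, h⟩ = Submodule.Quotient.mk c := by
      rw [← h1, LinearEquiv.symm_apply_apply]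
    show f (eT.symm ⟨T c, h⟩) = T' c
    rw [h2]
    exact Submodule.liftQ_apply _ _ _
  have hLnorm : ∀ s : LinearMap.range T, ‖L s‖ = ‖s‖ := by
    rintro ⟨s, c, rfl⟩
    exact (congrArg norm (hL c _)).trans (hnorm_eq c)
  let Li : LinearMap.range T →ₗᵢ[ℝ] EuclideanSpace ℝ (Fin n) := ⟨L, hLnorm⟩
  let Qi : EuclideanSpace ℝ (Fin n) →ₗᵢ[ℝ] EuclideanSpace ℝ (Fin n) := Li.extend
  have hQa : ∀ a, Qi (vE a) = vE' a := by
    intro a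
    have hva : T (Pi.single a 1) = vE a := by
      rw [hTval]
      rw [Finset.sum_eq_single a]
      · simp
      · intro b _ hb
        simp [Pi.single_apply, hb]
      · simp
    have hva' : T' (Pi.single a 1) = vE' a := by
      rw [hTval']
      rw [Finset.sum_eq_single a]
      · simp
      · intro b _ hb
        simp [Pi.single_apply, hb]
      · simp
    have hmem : vE a ∈ LinearMap.range T := ⟨Pi.single a 1, hva⟩
    have : Qi (vE a) = Li ⟨vE a, hmem⟩ := Li.extend_apply ⟨vE a, hmem⟩
    rw [this]
    show L ⟨vE a, hmem⟩ = vE' a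
    have : (⟨vE a, hmem⟩ : LinearMap.range T) = ⟨T (Pi.single a 1), ⟨_, rfl⟩⟩ :=
      Subtype.ext hva.symm
    rw [this]
    exact (hL _ _).trans hva'
  have hQsurj : Function.Surjective Qi :=
    LinearMap.injective_iff_surjective.mp Qi.injective
  let Qe := LinearIsometryEquiv.ofSurjective Qi hQsurj
  have hQe : ∀ x : EuclideanSpace ℝ (Fin n), Qe x = Qi x := fun _ => rfl
  refine ⟨(WithLp.linearEquiv 2 ℝ (Fin n → ℝ)).symm.trans
    (Qe.toLinearEquiv.trans (WithLp.linearEquiv 2 ℝ (Fin n → ℝ))), ?_, ?_⟩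
  · intro w u
    have := Qe.inner_map_map (WithLp.toLp 2 w) (WithLp.toLp 2 u)
    rw [hinner, hinner] at this
    exact this
  · intro a
    show (Qe (vE a)).ofLp = v' a
    rw [hQe, hQa]

lemma aux_law_z {Ω : Type} [MeasurableSpace Ω] (P : Measure Ω) [IsProbabilityMeasure P]
    {n : ℕ} (σ2 : ℝ≥0) (z : Ω → Fin n → ℝ)
    (hzmeas : ∀ i, Measurable fun ω => z ω i)
    (hzdist : ∀ i, P.map (fun ω => z ω i) = gaussianReal 0 σ2)
    (hzindep : iIndepFun (fun i ω => z ω i) P) :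
    P.map z = Measure.pi fun _ : Fin n => gaussianReal 0 σ2 := by
  have hzm : Measurable z := measurable_pi_iff.mpr hzmeas
  refine (Measure.pi_eq fun s hs => ?_).symm
  rw [Measure.map_apply hzm (MeasurableSet.univ_pi hs)]
  have hset : z ⁻¹' Set.univ.pi s
      = ⋂ i ∈ Finset.univ, (fun ω => z ω i) ⁻¹' s i := by
    ext ω
    simp [Set.mem_pi]
  rw [hset, (iIndepFun_iff_measure_inter_preimage_eq_mul.mp hzindep) Finset.univ
    (fun i _ => hs i)]
  refine Finset.prod_congr rfl fun i _ => ?_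
  rw [← Measure.map_apply (hzmeas i) (hs i), hzdist i]

end AuxLemmas

/-- permutation invariance for multiple knockoffs of a null feature:
in the fixed-design Gaussian linear model `y = Xβ + z`, if `β_j = 0` and
`x̃_j^{(1)}, …, x̃_j^{(M)}` are multiple knockoff copies of `x_j` satisfying the
multiple-knockoff correlation conditions, then writing `x̃_j^{(0)} = x_j`, for every
permutation `π` of `{0, 1, …, M}` the vector
`(yᵀX_{\j}, yᵀx̃_j^{(0)}, …, yᵀx̃_j^{(M)})` has the same distribution as
`(yᵀX_{\j}, yᵀx̃_j^{(π(0))}, …, yᵀx̃_j^{(π(M))})`; in particular the OLS coefficients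
`(β̂_j^{(0)}, …, β̂_j^{(M)})` — where `β̂_j^{(m)}` is the coefficient of `x̃_j^{(m)}` from
regressing `y` onto `X` with its `j`-th column replaced by `x̃_j^{(m)}` — are exchangeable. -/
theorem stmt_9
    {Ω : Type} [MeasurableSpace Ω] (P : Measure Ω) [IsProbabilityMeasure P]
    (n p M : ℕ)
    (X : Matrix (Fin n) (Fin p) ℝ) (hrank : X.rank = p)
    (hcols : ∀ j, Xᵀ j ⬝ᵥ Xᵀ j = 1)
    (β : Fin p → ℝ) (σ2 : ℝ≥0)
    (z : Ω → Fin n → ℝ)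
    (hzmeas : ∀ i, Measurable fun ω => z ω i)
    (hzdist : ∀ i, P.map (fun ω => z ω i) = gaussianReal 0 σ2)
    (hzindep : iIndepFun (fun i ω => z ω i) P)
    (y : Ω → Fin n → ℝ) (hy : ∀ ω, y ω = X.mulVec β + z ω)
    (j : Fin p) (hnull : β j = 0)
    (sj : ℝ)
    (xt : Fin M → Fin n → ℝ)
    (hkn : ∀ m : Fin M,
      (∀ i, i ≠ j → Xᵀ i ⬝ᵥ xt m = Xᵀ i ⬝ᵥ Xᵀ j) ∧
      Xᵀ j ⬝ᵥ xt m = 1 - sj ∧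
      xt m ⬝ᵥ xt m = 1 ∧
      ∀ l : Fin M, l ≠ m → xt m ⬝ᵥ xt l = 1 - sj)
    (xe : Fin (M + 1) → Fin n → ℝ) (hxe : xe = Fin.cons (Xᵀ j) xt)
    (bhat : Fin (M + 1) → Ω → ℝ)
    (hbhat : ∀ m ω, bhat m ω =
      ((((X.updateCol j (xe m))ᵀ * X.updateCol j (xe m))⁻¹
          * (X.updateCol j (xe m))ᵀ).mulVec (y ω)) j) :
    ∀ π : Equiv.Perm (Fin (M + 1)),
      (P.map (fun ω =>
          ((fun i : {i : Fin p // i ≠ j} => y ω ⬝ᵥ Xᵀ (i : Fin p)),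
            fun m : Fin (M + 1) => y ω ⬝ᵥ xe m))
        = P.map (fun ω =>
          ((fun i : {i : Fin p // i ≠ j} => y ω ⬝ᵥ Xᵀ (i : Fin p)),
            fun m : Fin (M + 1) => y ω ⬝ᵥ xe (π m)))) ∧
      P.map (fun ω => fun m : Fin (M + 1) => bhat m ω)
        = P.map (fun ω => fun m : Fin (M + 1) => bhat (π m) ω) := by
  intro π
  classical
  have hzm : Measurable z := measurable_pi_iff.mpr hzmeas
  -- basic dot-product facts about the knockoff family
  have fact1 : ∀ (i : Fin p), i ≠ j → ∀ m : Fin (M+1), Xᵀ i ⬝ᵥ xe m = Xᵀ i ⬝ᵥ Xᵀ j := by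
    intro i hi m
    rw [hxe]
    refine Fin.cases ?_ ?_ m
    · simp
    · intro m'
      simp only [Fin.cons_succ]
      exact (hkn m').1 i hi
  have fact3 : ∀ m : Fin (M+1), xe m ⬝ᵥ xe m = 1 := by
    intro m
    rw [hxe]
    refine Fin.cases ?_ ?_ m
    · simpa using hcols j
    · intro m'
      simpa using (hkn m').2.2.1
  have fact2 : ∀ m l : Fin (M+1), m ≠ l → xe m ⬝ᵥ xe l = 1 - sj := by
    intro m l
    rw [hxe]
    refine Fin.cases ?_ ?_ m <;> [skip; intro m'] <;> refine Fin.cases ?_ ?_ l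
    · intro h; exact absurd rfl h
    · intro l' _
      simpa using (hkn l').2.1
    · intro _
      simp only [Fin.cons_succ, Fin.cons_zero]
      rw [dotProduct_comm]
      exact (hkn m').2.1
    · intro l' hne
      simp only [Fin.cons_succ]
      refine (hkn m').2.2.2 l' ?_
      intro h
      exact hne (by rw [h])
  -- Gram equality and isometry
  obtain ⟨Q, hdot, hmap⟩ := aux_gram_isometry
    (Sum.elim (fun i : {i : Fin p // i ≠ j} => Xᵀ (i : Fin p)) (fun m : Fin (M+1) => xe (π m)))
    (Sum.elim (fun i : {i : Fin p // i ≠ j} => Xᵀ (i : Fin p)) (fun m : Fin (M+1) => xe m))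
    (by
      rintro (⟨i, hi⟩ | m) (⟨i', hi'⟩ | l) <;> simp only [Sum.elim_inl, Sum.elim_inr]
      · rw [fact1 i hi (π l), fact1 i hi l]
      · rw [dotProduct_comm, dotProduct_comm (xe m)]
        rw [fact1 i' hi' (π m), fact1 i' hi' m]
      · by_cases h : m = l
        · subst h
          rw [fact3 (π m), fact3 m]
        · rw [fact2 (π m) (π l) (fun hh => h (π.injective hh)), fact2 m l h])
  have hQx : ∀ i : {i : Fin p // i ≠ j}, Q (Xᵀ (i : Fin p)) = Xᵀ (i : Fin p) :=
    fun i => hmap (Sum.inl i)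
  have hQxe : ∀ m : Fin (M+1), Q (xe (π m)) = xe m := fun m => hmap (Sum.inr m)
  -- mean invariance
  have hXdot : ∀ u : Fin n → ℝ, X.mulVec β ⬝ᵥ u = ∑ k, β k * (Xᵀ k ⬝ᵥ u) := by
    intro u
    simp only [Matrix.mulVec, dotProduct, Matrix.transpose_apply, Finset.sum_mul,
      Finset.mul_sum]
    rw [Finset.sum_comm]
    exact Finset.sum_congr rfl fun k _ => Finset.sum_congr rfl fun i _ => by ring
  have hmean : ∀ m m' : Fin (M+1), X.mulVec β ⬝ᵥ xe m = X.mulVec β ⬝ᵥ xe m' := by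
    intro m m'
    rw [hXdot, hXdot]
    refine Finset.sum_congr rfl fun k _ => ?_
    by_cases hk : k = j
    · subst hk
      rw [hnull]
      ring
    · rw [fact1 k hk m, fact1 k hk m']
  -- law of z and invariance
  have hlaw := aux_law_z P σ2 z hzmeas hzdist hzindep
  have hQm : Measurable (⇑Q) := (LinearMap.continuous_on_pi Q.toLinearMap).measurable
  have hkey : P.map (fun ω => Q (z ω)) = P.map z := by
    have h1 : (fun ω => Q (z ω)) = ⇑Q ∘ z := rfl
    rw [h1, ← Measure.map_map hQm hzm, hlaw, aux_map_pi_gaussian σ2 Q hdot]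
  -- the deterministic map F
  set F : (Fin n → ℝ) → ({i : Fin p // i ≠ j} → ℝ) × (Fin (M + 1) → ℝ) :=
    fun w => ((fun i : {i : Fin p // i ≠ j} => (X.mulVec β + w) ⬝ᵥ Xᵀ (i : Fin p)),
      fun m : Fin (M + 1) => (X.mulVec β + w) ⬝ᵥ xe m) with hF
  have hdm : ∀ u : Fin n → ℝ, Measurable (fun w : Fin n → ℝ => (X.mulVec β + w) ⬝ᵥ u) := by
    intro u
    simp only [dotProduct, Pi.add_apply]
    exact Finset.measurable_sum _ fun k _ =>
      by fun_prop
  have hFmeas : Measurable F := by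
    apply Measurable.prodMk
    · exact measurable_pi_lambda _ fun i => hdm _
    · exact measurable_pi_lambda _ fun m => hdm _
  have hLHS : (fun ω =>
      ((fun i : {i : Fin p // i ≠ j} => y ω ⬝ᵥ Xᵀ (i : Fin p)),
        fun m : Fin (M + 1) => y ω ⬝ᵥ xe m)) = F ∘ z := by
    funext ω
    rw [Function.comp_apply, hF]
    refine Prod.ext ?_ ?_ <;> funext ii <;> rw [hy ω]
  have hRHS : (fun ω =>
      ((fun i : {i : Fin p // i ≠ j} => y ω ⬝ᵥ Xᵀ (i : Fin p)),
        fun m : Fin (M + 1) => y ω ⬝ᵥ xe (π m))) = F ∘ (fun ω => Q (z ω)) := by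
    funext ω
    rw [Function.comp_apply, hF]
    refine Prod.ext ?_ ?_
    · funext i
      show y ω ⬝ᵥ Xᵀ (i : Fin p) = (X.mulVec β + Q (z ω)) ⬝ᵥ Xᵀ (i : Fin p)
      rw [hy ω, add_dotProduct, add_dotProduct]
      congr 1
      conv_rhs => rw [← hQx i]
      rw [hdot]
    · funext m
      show y ω ⬝ᵥ xe (π m) = (X.mulVec β + Q (z ω)) ⬝ᵥ xe m
      rw [hy ω, add_dotProduct, add_dotProduct, hmean (π m) m]
      congr 1
      conv_rhs => rw [← hQxe m]
      rw [hdot]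
  have hQzm : Measurable (fun ω => Q (z ω)) := hQm.comp hzm
  have hfirst : P.map (fun ω =>
      ((fun i : {i : Fin p // i ≠ j} => y ω ⬝ᵥ Xᵀ (i : Fin p)),
        fun m : Fin (M + 1) => y ω ⬝ᵥ xe m))
      = P.map (fun ω =>
      ((fun i : {i : Fin p // i ≠ j} => y ω ⬝ᵥ Xᵀ (i : Fin p)),
        fun m : Fin (M + 1) => y ω ⬝ᵥ xe (π m))) := by
    rw [hLHS, hRHS, ← Measure.map_map hFmeas hzm, ← Measure.map_map hFmeas hQzm, hkey]
  refine ⟨hfirst, ?_⟩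
  -- second part: the OLS coefficients are a fixed linear image of the above vectors
  have hcol : ∀ (m : Fin (M+1)) (k : Fin p),
      (X.updateCol j (xe m))ᵀ k = (if k = j then xe m else Xᵀ k) := by
    intro m k
    funext i
    rw [Matrix.transpose_apply, Matrix.updateCol_apply, ite_apply]
    rfl
  have hmulT : ∀ (A : Matrix (Fin n) (Fin p) ℝ) (k l : Fin p),
      (Aᵀ * A) k l = Aᵀ k ⬝ᵥ Aᵀ l := by
    intro A k l
    simp [Matrix.mul_apply, dotProduct, Matrix.transpose_apply]
  have hW : ∀ m : Fin (M+1),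
      (X.updateCol j (xe m))ᵀ * X.updateCol j (xe m) = Xᵀ * X := by
    intro m
    ext k l
    rw [hmulT, hmulT, hcol m k, hcol m l]
    by_cases hk : k = j <;> by_cases hl : l = j
    · subst hk; subst hl
      rw [if_pos rfl, fact3 m, hcols _]
    · subst hk
      rw [if_pos rfl, if_neg hl, dotProduct_comm, fact1 l hl m, dotProduct_comm]
    · subst hl
      rw [if_neg hk, if_pos rfl, fact1 k hk m]
    · rw [if_neg hk, if_neg hl]
  have hbex : ∀ (m : Fin (M+1)) (ω : Ω), bhat m ω
      = (∑ k : {i : Fin p // i ≠ j}, ((Xᵀ * X)⁻¹) j (k : Fin p) * (y ω ⬝ᵥ Xᵀ (k : Fin p)))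
        + ((Xᵀ * X)⁻¹) j j * (y ω ⬝ᵥ xe m) := by
    intro m ω
    rw [hbhat, hW m]
    have h1 : (((Xᵀ * X)⁻¹ * (X.updateCol j (xe m))ᵀ).mulVec (y ω)) j
        = ∑ k, ((Xᵀ * X)⁻¹) j k * (((X.updateCol j (xe m))ᵀ).mulVec (y ω) k) := by
      rw [← Matrix.mulVec_mulVec]
      simp [Matrix.mulVec, dotProduct]
    rw [h1]
    have h2 : ∀ k, ((X.updateCol j (xe m))ᵀ).mulVec (y ω) k
        = (if k = j then y ω ⬝ᵥ xe m else y ω ⬝ᵥ Xᵀ k) := by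
      intro k
      rw [show ((X.updateCol j (xe m))ᵀ).mulVec (y ω) k
        = (X.updateCol j (xe m))ᵀ k ⬝ᵥ y ω from rfl, hcol m k]
      by_cases hk : k = j
      · rw [if_pos hk, if_pos hk, dotProduct_comm]
      · rw [if_neg hk, if_neg hk, dotProduct_comm]
    simp only [h2]
    rw [← Finset.sum_erase_add Finset.univ _ (Finset.mem_univ j)]
    congr 1
    · rw [Finset.sum_subtype (p := fun i => i ≠ j) (Finset.univ.erase j)
        (fun x => by simp [Finset.mem_erase])
        (fun k => ((Xᵀ * X)⁻¹) j k * (if k = j then y ω ⬝ᵥ xe m else y ω ⬝ᵥ Xᵀ k))]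
      refine Finset.sum_congr rfl fun k _ => ?_
      rw [if_neg k.2]
    · rw [if_pos rfl]
  set H : (({i : Fin p // i ≠ j} → ℝ) × (Fin (M + 1) → ℝ)) → (Fin (M + 1) → ℝ) :=
    fun q m => (∑ k : {i : Fin p // i ≠ j}, ((Xᵀ * X)⁻¹) j (k : Fin p) * q.1 k)
      + ((Xᵀ * X)⁻¹) j j * q.2 m with hH
  have hHmeas : Measurable H := by
    apply measurable_pi_lambda
    intro m
    apply Measurable.add
    · exact Finset.measurable_sum _ fun k _ =>
        (((measurable_pi_apply k).comp measurable_fst).const_mul _)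
    · exact (((measurable_pi_apply m).comp measurable_snd).const_mul _)
  have hcomp1 : (fun ω => fun m : Fin (M + 1) => bhat m ω)
      = H ∘ (fun ω =>
        ((fun i : {i : Fin p // i ≠ j} => y ω ⬝ᵥ Xᵀ (i : Fin p)),
          fun m : Fin (M + 1) => y ω ⬝ᵥ xe m)) := by
    funext ω
    funext m
    rw [Function.comp_apply, hH]
    exact hbex m ω
  have hcomp2 : (fun ω => fun m : Fin (M + 1) => bhat (π m) ω)
      = H ∘ (fun ω =>
        ((fun i : {i : Fin p // i ≠ j} => y ω ⬝ᵥ Xᵀ (i : Fin p)),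
          fun m : Fin (M + 1) => y ω ⬝ᵥ xe (π m))) := by
    funext ω
    funext m
    rw [Function.comp_apply, hH]
    exact hbex (π m) ω
  have hv1m : Measurable (fun ω =>
      ((fun i : {i : Fin p // i ≠ j} => y ω ⬝ᵥ Xᵀ (i : Fin p)),
        fun m : Fin (M + 1) => y ω ⬝ᵥ xe m)) := by
    rw [hLHS]
    exact hFmeas.comp hzm
  have hv2m : Measurable (fun ω =>
      ((fun i : {i : Fin p // i ≠ j} => y ω ⬝ᵥ Xᵀ (i : Fin p)),
        fun m : Fin (M + 1) => y ω ⬝ᵥ xe (π m))) := by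
    rw [hRHS]
    exact hFmeas.comp hQzm
  rw [hcomp1, hcomp2, ← Measure.map_map hHmeas hv1m, ← Measure.map_map hHmeas hv2m, hfirst]
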